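/- Let ρ : ℝ → Matrix (ιA × ιB) (ιA × ιB) ℂ be entrywise differentiable at t₀ with derivative ρ', with ρ(t) Hermitian for every t, and suppose the partial transpose M := (ρ(t₀))^{T_B} is invertible. Then the negativity N(t) := (1/2)·(‖(ρ(t))^{T_B}‖₁ − 1) is differentiable at t₀ with derivative (1/2)·Re trace( M·|M|⁻¹ · (ρ')^{T_B} ), i.e. one half the trace of the matrix sign function of ρ(t₀)^{T_B} against the partial transpose of the derivative. -/

import Mathlib

open Matrix
open scoped ComplexOrder

/-- The matrix absolute value `|X|`: the unique positive semidefinite square root of `Xᴴ * X`. -/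
noncomputable def matAbs {n : Type*} [Fintype n] [DecidableEq n] (X : Matrix n n ℂ) :
    Matrix n n ℂ :=
  (Matrix.posSemidef_conjTranspose_mul_self X).1.eigenvectorUnitary.1 *
    diagonal ((↑) ∘ (Real.sqrt ∘ (Matrix.posSemidef_conjTranspose_mul_self X).1.eigenvalues)) *
    (star (Matrix.posSemidef_conjTranspose_mul_self X).1.eigenvectorUnitary : Matrix n n ℂ)

/-- The trace norm `‖X‖₁ = trace |X|` (a real number). -/
noncomputable def traceNorm {n : Type*} [Fintype n] [DecidableEq n] (X : Matrix n n ℂ) : ℝ :=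
  ((matAbs X).trace).re

/-- Partial transpose over the second tensor factor:
`ρ^{T_B} ((a,b),(a',b')) = ρ ((a,b'),(a',b))`. -/
def ptransB {ιA ιB : Type*} (ρ : Matrix (ιA × ιB) (ιA × ιB) ℂ) :
    Matrix (ιA × ιB) (ιA × ιB) ℂ :=
  Matrix.of fun p q => ρ (p.1, q.2) (q.1, p.2)

set_option linter.unusedSectionVars false
set_option maxHeartbeats 1000000

section NegAux
variable {n : Type*} [Fintype n] [DecidableEq n]
open scoped MatrixOrder

lemma matAbs_eq_sqrt (X : Matrix n n ℂ) : matAbs X = CFC.sqrt (Xᴴ * X) := by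
  rw [CFC.sqrt_eq_real_sqrt _ (Matrix.posSemidef_conjTranspose_mul_self X).nonneg, cfcₙ_eq_cfc,
    (Matrix.posSemidef_conjTranspose_mul_self X).1.cfc_eq]
  rfl

lemma matAbs_posSemidef (X : Matrix n n ℂ) : (matAbs X).PosSemidef := by
  rw [matAbs_eq_sqrt]
  exact (CFC.sqrt_nonneg _).posSemidef

lemma matAbs_mul_self (X : Matrix n n ℂ) : matAbs X * matAbs X = Xᴴ * X := by
  rw [matAbs_eq_sqrt]
  exact CFC.sqrt_mul_sqrt_self _ (Matrix.posSemidef_conjTranspose_mul_self X).nonneg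

/-- Cauchy–Schwarz for the complex dot product. -/
lemma neg_cs_dot (u v : n → ℂ) :
    ‖star u ⬝ᵥ v‖ ≤ Real.sqrt (star u ⬝ᵥ u).re * Real.sqrt (star v ⬝ᵥ v).re := by
  let x : EuclideanSpace ℂ n := (WithLp.equiv 2 _).symm u
  let y : EuclideanSpace ℂ n := (WithLp.equiv 2 _).symm v
  have hxy : (inner ℂ x y : ℂ) = star u ⬝ᵥ v :=
    (EuclideanSpace.inner_eq_star_dotProduct x y).trans (dotProduct_comm _ _)
  have hxx : (inner ℂ x x : ℂ) = star u ⬝ᵥ u :=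
    (EuclideanSpace.inner_eq_star_dotProduct x x).trans (dotProduct_comm _ _)
  have hyy : (inner ℂ y y : ℂ) = star v ⬝ᵥ v :=
    (EuclideanSpace.inner_eq_star_dotProduct y y).trans (dotProduct_comm _ _)
  have h := norm_inner_le_norm (𝕜 := ℂ) x y
  rw [hxy] at h
  rwa [norm_eq_sqrt_re_inner (𝕜 := ℂ) x, norm_eq_sqrt_re_inner (𝕜 := ℂ) y, hxx, hyy] at h

lemma neg_conj_mul_entry (X U : Matrix n n ℂ) (i : n) :
    (star U * X * U) i i = star (fun j => U j i) ⬝ᵥ (X *ᵥ fun j => U j i) := by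
  simp only [Matrix.mul_apply, Matrix.mulVec, dotProduct, Matrix.star_apply, Pi.star_apply,
    Finset.sum_mul, Finset.mul_sum]
  rw [Finset.sum_comm]
  exact Finset.sum_congr rfl fun j _ => Finset.sum_congr rfl fun k _ => by ring

lemma neg_dot_self_nonneg (w : n → ℂ) : 0 ≤ (star w ⬝ᵥ w).re := by
  simp only [dotProduct, Pi.star_apply, Complex.re_sum]
  exact Finset.sum_nonneg fun j _ => by simpa using add_nonneg (mul_self_nonneg (w j).re) (mul_self_nonneg (w j).im)

lemma neg_conj_sandwich_mul (U X Y : Matrix n n ℂ) (hU1 : star U * U = 1) :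
    (U * X * star U) * (U * Y * star U) = U * (X * Y) * star U := by
  rw [show (U * X * star U) * (U * Y * star U)
      = U * X * ((star U * U) * (Y * star U)) by simp only [Matrix.mul_assoc], hU1, one_mul]
  simp only [Matrix.mul_assoc]

lemma matAbs_spectral {A : Matrix n n ℂ} (hA : A.IsHermitian) :
    matAbs A = (hA.eigenvectorUnitary : Matrix n n ℂ) *
      diagonal (fun i => ((|hA.eigenvalues i| : ℝ) : ℂ)) *
      star (hA.eigenvectorUnitary : Matrix n n ℂ) := by
  set U := (hA.eigenvectorUnitary : Matrix n n ℂ) with hU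
  set d := hA.eigenvalues with hd
  have hU1 : star U * U = 1 := Matrix.mem_unitaryGroup_iff'.mp (hA.eigenvectorUnitary).2
  set N : Matrix n n ℂ := U * diagonal (fun i => ((|d i| : ℝ) : ℂ)) * star U with hN
  have hNpsd : N.PosSemidef := by
    set f : n → ℂ := fun i => ((Real.sqrt |d i| : ℝ) : ℂ) with hf
    have key : (diagonal f * star U)ᴴ * (diagonal f * star U) = N := by
      rw [conjTranspose_mul, diagonal_conjTranspose]
      rw [show (star U)ᴴ = U from star_star U]
      rw [Matrix.mul_assoc U, ← Matrix.mul_assoc (diagonal (star f)), diagonal_mul_diagonal,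
        ← Matrix.mul_assoc, hN]
      congr 2
      funext i
      simp only [hf, Pi.star_apply, RCLike.star_def, Complex.conj_ofReal,
        ← Complex.ofReal_mul, Real.mul_self_sqrt (abs_nonneg _)]
    rw [← key]
    exact Matrix.posSemidef_conjTranspose_mul_self _
  have hsq : N ^ 2 = Aᴴ * A := by
    rw [hA.eq, pow_two, hN, neg_conj_sandwich_mul _ _ _ hU1]
    conv_rhs => rw [hA.spectral_theorem, Unitary.conjStarAlgAut_apply, neg_conj_sandwich_mul _ _ _ hU1]
    congr 2
    rw [diagonal_mul_diagonal, diagonal_mul_diagonal]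
    funext i
    simp only [Function.comp_apply, ← Complex.ofReal_mul, abs_mul_abs_self]
    push_cast
    rfl
  rw [matAbs_eq_sqrt]
  exact CFC.sqrt_unique (by rw [← pow_two]; exact hsq) hNpsd.nonneg

lemma neg_col_dot_self (U : Matrix n n ℂ) (i : n) :
    star (fun j => U j i) ⬝ᵥ (fun j => U j i) = (star U * U) i i := by
  simp [Matrix.mul_apply, dotProduct, Matrix.star_apply]

lemma neg_trace_mul_diag_sum (C : Matrix n n ℂ) (v : n → ℂ) :
    (C * diagonal v).trace = ∑ i, C i i * v i := by
  simp [Matrix.trace, Matrix.diag, Matrix.mul_diagonal]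

lemma traceNorm_eq_sum {A : Matrix n n ℂ} (hA : A.IsHermitian) :
    traceNorm A = ∑ i, |hA.eigenvalues i| := by
  have hU1 : star (hA.eigenvectorUnitary : Matrix n n ℂ) * (hA.eigenvectorUnitary : Matrix n n ℂ)
      = 1 := Matrix.mem_unitaryGroup_iff'.mp (hA.eigenvectorUnitary).2
  rw [traceNorm, matAbs_spectral hA, trace_mul_comm, ← Matrix.mul_assoc, hU1, one_mul,
    trace_diagonal]
  simp

lemma neg_trace_mul_spectral (S : Matrix n n ℂ) {A : Matrix n n ℂ} (hA : A.IsHermitian) :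
    (S * A).trace = ∑ i,
      ((star (hA.eigenvectorUnitary : Matrix n n ℂ) * S * (hA.eigenvectorUnitary : Matrix n n ℂ))
        i i) * ((hA.eigenvalues i : ℝ) : ℂ) := by
  set U := (hA.eigenvectorUnitary : Matrix n n ℂ) with hU
  have hU1 : star U * U = 1 := Matrix.mem_unitaryGroup_iff'.mp (hA.eigenvectorUnitary).2
  conv_lhs => rw [hA.spectral_theorem, Unitary.conjStarAlgAut_apply]
  rw [show S * (U * diagonal (RCLike.ofReal ∘ hA.eigenvalues) * star U)
      = (S * U * diagonal (RCLike.ofReal ∘ hA.eigenvalues)) * star U by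
    simp only [Matrix.mul_assoc], trace_mul_comm,
    show star U * (S * U * diagonal (RCLike.ofReal ∘ hA.eigenvalues))
      = (star U * S * U) * diagonal (RCLike.ofReal ∘ hA.eigenvalues) by
    simp only [Matrix.mul_assoc], neg_trace_mul_diag_sum]
  rfl

/-- Lower bound: `Re tr (S A) ≤ ‖A‖₁` when `SᴴS = 1` and `A` Hermitian. -/
lemma re_trace_mul_le_traceNorm (S : Matrix n n ℂ) {A : Matrix n n ℂ} (hA : A.IsHermitian)
    (hS : Sᴴ * S = 1) : ((S * A).trace).re ≤ traceNorm A := by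
  set U := (hA.eigenvectorUnitary : Matrix n n ℂ) with hU
  set d := hA.eigenvalues with hd
  have hU1 : star U * U = 1 := Matrix.mem_unitaryGroup_iff'.mp (hA.eigenvectorUnitary).2
  rw [neg_trace_mul_spectral S hA, traceNorm_eq_sum hA, Complex.re_sum]
  apply Finset.sum_le_sum
  intro i _
  set u : n → ℂ := fun j => U j i with hu
  have hnorm : ‖(star U * S * U) i i‖ ≤ 1 := by
    have hC : (star U * S * U) i i = star u ⬝ᵥ (S *ᵥ u) := neg_conj_mul_entry S U i
    have h1 : star u ⬝ᵥ u = 1 := by rw [neg_col_dot_self U i, hU1]; simp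
    have h2 : star (S *ᵥ u) ⬝ᵥ (S *ᵥ u) = 1 := by
      rw [star_mulVec, dotProduct_mulVec, vecMul_vecMul, hS, vecMul_one, h1]
    have := neg_cs_dot u (S *ᵥ u)
    rw [h1, h2] at this
    rw [hC]
    simpa using this
  have hre : ((star U * S * U) i i * ((d i : ℝ) : ℂ)).re = ((star U * S * U) i i).re * d i := by
    simp [Complex.mul_re]
  rw [hre]
  calc ((star U * S * U) i i).re * d i ≤ |((star U * S * U) i i).re * d i| := le_abs_self _
    _ = |((star U * S * U) i i).re| * |d i| := abs_mul _ _
    _ ≤ 1 * |d i| := by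
        apply mul_le_mul_of_nonneg_right _ (abs_nonneg _)
        exact le_trans (Complex.abs_re_le_norm _) hnorm
    _ = |d i| := one_mul _

lemma neg_key_cc (P R : Matrix n n ℂ) (u : n → ℂ) (hRR : R * R = P)
    (hRinv : (R⁻¹)ᴴ = R⁻¹) (hRherm : R.IsHermitian) (hRdet : IsUnit R.det)
    (huu : star u ⬝ᵥ u = 1) :
    0 ≤ (star u ⬝ᵥ (P⁻¹ *ᵥ u)).re ∧ 0 ≤ (star u ⬝ᵥ (P *ᵥ u)).re ∧
      1 ≤ (star u ⬝ᵥ (P⁻¹ *ᵥ u)).re * (star u ⬝ᵥ (P *ᵥ u)).re := by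
  set w := R⁻¹ *ᵥ u with hw
  set v := R *ᵥ u with hv
  have hww : star w ⬝ᵥ w = star u ⬝ᵥ (P⁻¹ *ᵥ u) := by
    rw [hw, star_mulVec, dotProduct_mulVec, vecMul_vecMul, hRinv,
      show R⁻¹ * R⁻¹ = P⁻¹ by rw [← hRR, Matrix.mul_inv_rev],
      dotProduct_mulVec]
  have hvv : star v ⬝ᵥ v = star u ⬝ᵥ (P *ᵥ u) := by
    rw [hv, star_mulVec, dotProduct_mulVec, vecMul_vecMul, hRherm.eq, hRR, dotProduct_mulVec]
  have hwv : star w ⬝ᵥ v = 1 := by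
    rw [hw, hv, star_mulVec, dotProduct_mulVec, vecMul_vecMul, hRinv,
      Matrix.nonsing_inv_mul R hRdet, vecMul_one, huu]
  have hcs := neg_cs_dot w v
  rw [hwv, hww, hvv] at hcs
  norm_num at hcs
  have hc : 0 ≤ (star u ⬝ᵥ (P⁻¹ *ᵥ u)).re := hww ▸ neg_dot_self_nonneg w
  have hc' : 0 ≤ (star u ⬝ᵥ (P *ᵥ u)).re := hvv ▸ neg_dot_self_nonneg v
  refine ⟨hc, hc', ?_⟩
  nlinarith [Real.sq_sqrt hc, Real.sq_sqrt hc', Real.sqrt_nonneg ((star u ⬝ᵥ (P⁻¹ *ᵥ u)).re),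
    Real.sqrt_nonneg ((star u ⬝ᵥ (P *ᵥ u)).re)]

/-- Upper bound: `‖A‖₁ ≤ (Re tr (A P⁻¹ A) + Re tr P)/2` for Hermitian `A`, PSD invertible `P`. -/
lemma traceNorm_le_quad {A : Matrix n n ℂ} (hA : A.IsHermitian) {P : Matrix n n ℂ}
    (hP : P.PosSemidef) (hPdet : IsUnit P.det) :
    traceNorm A ≤ (((A * P⁻¹ * A).trace).re + (P.trace).re) / 2 := by
  set U := (hA.eigenvectorUnitary : Matrix n n ℂ) with hU
  set d := hA.eigenvalues with hd
  have hU1 : star U * U = 1 := Matrix.mem_unitaryGroup_iff'.mp (hA.eigenvectorUnitary).2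
  have hU2 : U * star U = 1 := Matrix.mem_unitaryGroup_iff.mp (hA.eigenvectorUnitary).2
  set C : Matrix n n ℂ := star U * P⁻¹ * U with hC
  set C' : Matrix n n ℂ := star U * P * U with hC'
  set D : Matrix n n ℂ := diagonal (RCLike.ofReal ∘ d) with hD
  have h1 : (A * P⁻¹ * A).trace = ∑ i, ((d i : ℝ) : ℂ) * C i i * ((d i : ℝ) : ℂ) := by
    conv_lhs => rw [hA.spectral_theorem, Unitary.conjStarAlgAut_apply]
    rw [show (U * D * star U) * P⁻¹ * (U * D * star U)
        = (U * (D * C * D)) * star U by rw [hC]; simp only [Matrix.mul_assoc],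
      trace_mul_comm, ← Matrix.mul_assoc, hU1, one_mul]
    have hdiag : ∀ i, (D * C * D) i i = ((d i : ℝ) : ℂ) * C i i * ((d i : ℝ) : ℂ) := by
      intro i
      rw [Matrix.mul_diagonal, Matrix.diagonal_mul]
      rfl
    simp [Matrix.trace, Matrix.diag, hdiag]
  have h2 : P.trace = ∑ i, C' i i := by
    rw [show P.trace = (star U * P * U).trace by
      rw [trace_mul_comm, ← Matrix.mul_assoc, hU2, one_mul], hC']
    simp [Matrix.trace, Matrix.diag]
  set R := CFC.sqrt P with hR
  have hRR : R * R = P := CFC.sqrt_mul_sqrt_self P hP.nonneg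
  have hRherm : R.IsHermitian := (CFC.sqrt_nonneg P).posSemidef.1
  have hRdet : IsUnit R.det := by
    have : IsUnit (R.det * R.det) := by rw [← Matrix.det_mul, hRR]; exact hPdet
    exact isUnit_of_mul_isUnit_left this
  have hRinv : (R⁻¹)ᴴ = R⁻¹ := by rw [Matrix.conjTranspose_nonsing_inv, hRherm.eq]
  rw [traceNorm_eq_sum hA, h1, h2, Complex.re_sum, Complex.re_sum, ← Finset.sum_add_distrib]
  rw [le_div_iff₀ two_pos, Finset.sum_mul]
  apply Finset.sum_le_sum
  intro i _
  set u : n → ℂ := fun j => U j i with hu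
  have huu : star u ⬝ᵥ u = 1 := by rw [neg_col_dot_self U i, hU1]; simp
  obtain ⟨hc, hc', hcc⟩ := neg_key_cc P R u hRR hRinv hRherm hRdet huu
  have hCu : C i i = star u ⬝ᵥ (P⁻¹ *ᵥ u) := neg_conj_mul_entry P⁻¹ U i
  have hCu' : C' i i = star u ⬝ᵥ (P *ᵥ u) := neg_conj_mul_entry P U i
  rw [← hCu] at hc hcc
  rw [← hCu'] at hc' hcc
  have hre : (((d i : ℝ) : ℂ) * C i i * ((d i : ℝ) : ℂ)).re = d i ^ 2 * (C i i).re := by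
    rw [show ((d i : ℝ) : ℂ) * C i i * ((d i : ℝ) : ℂ)
        = ((d i ^ 2 : ℝ) : ℂ) * C i i by push_cast; ring, Complex.re_ofReal_mul]
  rw [hre]
  have hcpos : 0 < (C i i).re := by
    rcases hc.lt_or_eq with h | h
    · exact h
    · exfalso
      rw [← h] at hcc
      simp at hcc
      linarith
  show |d i| * 2 ≤ d i ^ 2 * (C i i).re + (C' i i).re
  have h3 : 1 / (C i i).re ≤ (C' i i).re := by
    rw [div_le_iff₀ hcpos]
    nlinarith [hcc]
  have h4 : 2 * |d i| ≤ d i ^ 2 * (C i i).re + 1 / (C i i).re := by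
    rw [← sub_nonneg]
    have heq : d i ^ 2 * (C i i).re + 1 / (C i i).re - 2 * |d i|
        = (|d i| * (C i i).re - 1) ^ 2 / (C i i).re := by
      rw [sub_sq, mul_pow, sq_abs]
      field_simp
      ring
    rw [heq]
    positivity
  linarith

lemma neg_hasDerivAt_re {t₀ : ℝ} {f : ℝ → ℂ} {f' : ℂ} (hf : HasDerivAt f f' t₀) :
    HasDerivAt (fun t => (f t).re) f'.re t₀ :=
  Complex.reCLM.hasFDerivAt.comp_hasDerivAt t₀ hf

lemma neg_hasDerivAt_trace_mul {t₀ : ℝ} (C : Matrix n n ℂ) {B : ℝ → Matrix n n ℂ}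
    {B' : Matrix n n ℂ} (h : ∀ p q, HasDerivAt (fun t => B t p q) (B' p q) t₀) :
    HasDerivAt (fun t => (C * B t).trace) ((C * B').trace) t₀ := by
  have e1 : (fun t => (C * B t).trace) = fun t => ∑ p, ∑ q, C p q * B t q p :=
    funext fun t => by simp [Matrix.trace, Matrix.diag, Matrix.mul_apply]
  have e2 : (C * B').trace = ∑ p, ∑ q, C p q * B' q p := by
    simp [Matrix.trace, Matrix.diag, Matrix.mul_apply]
  rw [e1, e2]
  exact HasDerivAt.fun_sum fun p _ => HasDerivAt.fun_sum fun q _ => (h q p).const_mul (C p q)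

lemma neg_hasDerivAt_trace_quad {t₀ : ℝ} (C : Matrix n n ℂ) {B : ℝ → Matrix n n ℂ}
    {B' : Matrix n n ℂ} (h : ∀ p q, HasDerivAt (fun t => B t p q) (B' p q) t₀) :
    HasDerivAt (fun t => (B t * C * B t).trace)
      ((B' * C * B t₀ + B t₀ * C * B').trace) t₀ := by
  have e1 : (fun t => (B t * C * B t).trace)
      = fun t => ∑ p, ∑ q, ∑ r, B t p r * C r q * B t q p :=
    funext fun t => by simp [Matrix.trace, Matrix.diag, Matrix.mul_apply, Finset.sum_mul]
  have e2 : (B' * C * B t₀ + B t₀ * C * B').trace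
      = ∑ p, ∑ q, ∑ r, (B' p r * C r q * B t₀ q p + B t₀ p r * C r q * B' q p) := by
    simp [Matrix.trace, Matrix.diag, Matrix.mul_apply, Finset.sum_mul,
      Finset.sum_add_distrib]
  rw [e1, e2]
  exact HasDerivAt.fun_sum fun p _ => HasDerivAt.fun_sum fun q _ => HasDerivAt.fun_sum fun r _ =>
    ((h p r).mul_const (C r q)).fun_mul (h q p)

lemma neg_squeeze_hasDerivAt {f g u : ℝ → ℝ} {D : ℝ} {t₀ : ℝ}
    (hg : HasDerivAt g D t₀) (hu : HasDerivAt u D t₀)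
    (h1 : ∀ t, g t ≤ f t) (h2 : ∀ t, f t ≤ u t)
    (heg : f t₀ = g t₀) (heu : f t₀ = u t₀) : HasDerivAt f D t₀ := by
  have hk : HasDerivAt (fun t => u t - g t) 0 t₀ := by simpa using hu.fun_sub hg
  have hk0 : u t₀ - g t₀ = 0 := by rw [← heu, ← heg]; ring
  have hko : (fun t => u t - g t) =o[nhds t₀] fun t => t - t₀ := by
    have := hasDerivAt_iff_isLittleO.mp hk
    rw [hk0] at this
    simpa using this
  have hho : (fun t => f t - g t) =o[nhds t₀] fun t => t - t₀ := by
    refine (Asymptotics.isBigO_of_le _ fun t => ?_).trans_isLittleO hko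
    rw [Real.norm_eq_abs, Real.norm_eq_abs, abs_of_nonneg (sub_nonneg.2 (h1 t)),
      abs_of_nonneg (by linarith [h1 t, h2 t])]
    linarith [h2 t]
  have hh : HasDerivAt (fun t => f t - g t) 0 t₀ := by
    rw [hasDerivAt_iff_isLittleO]
    have hf0 : f t₀ - g t₀ = 0 := by rw [heg]; ring
    rw [hf0]
    simpa using hho
  have hf := hg.fun_add hh
  have e : f = fun t => g t + (f t - g t) := by funext t; ring
  rw [e]
  simpa using hf

end NegAux

lemma ptransB_isHermitian {ιA ιB : Type*} [Fintype ιA] [Fintype ιB]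
    {ρ : Matrix (ιA × ιB) (ιA × ιB) ℂ} (h : ρ.IsHermitian) : (ptransB ρ).IsHermitian := by
  ext p q
  have := h.apply (q.1, p.2) (p.1, q.2)
  simpa [ptransB, Matrix.conjTranspose_apply] using (congrArg star this).symm

/-- **First derivative of the entanglement negativity.**
If `ρ : ℝ → Matrix (ιA × ιB) (ιA × ιB) ℂ` is entrywise differentiable at `t₀` with derivative
`ρ'`, each `ρ t` is Hermitian, and the partial transpose `M = (ρ t₀)^{T_B}` is invertible, then
the negativity `N(t) = (1/2)·(‖(ρ t)^{T_B}‖₁ − 1)` is differentiable at `t₀` with derivative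
`(1/2)·Re trace (M·|M|⁻¹·(ρ')^{T_B})`. -/
theorem negativity_hasDerivAt {ιA ιB : Type*}
    [Fintype ιA] [DecidableEq ιA] [Nonempty ιA]
    [Fintype ιB] [DecidableEq ιB] [Nonempty ιB]
    (ρ : ℝ → Matrix (ιA × ιB) (ιA × ιB) ℂ) (ρ' : Matrix (ιA × ιB) (ιA × ιB) ℂ) (t₀ : ℝ)
    (hderiv : ∀ p q, HasDerivAt (fun t => ρ t p q) (ρ' p q) t₀)
    (hherm : ∀ t, (ρ t).IsHermitian)
    (M : Matrix (ιA × ιB) (ιA × ιB) ℂ) (hM : M = ptransB (ρ t₀))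
    (hMinv : IsUnit M) :
    HasDerivAt (fun t => (1 / 2 : ℝ) * (traceNorm (ptransB (ρ t)) - 1))
      ((1 / 2 : ℝ) * ((M * (matAbs M)⁻¹ * ptransB ρ').trace).re) t₀ := by
  have hBherm : ∀ t, (ptransB (ρ t)).IsHermitian := fun t => ptransB_isHermitian (hherm t)
  -- ρ' is Hermitian
  have hρ'herm : ρ'.IsHermitian := by
    ext p q
    have h1 : HasDerivAt (fun t => ρ t p q) (ρ' p q) t₀ := hderiv p q
    have h2 : HasDerivAt (fun t => star (ρ t q p)) (star (ρ' q p)) t₀ := (hderiv q p).star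
    have he : (fun t => star (ρ t q p)) = fun t => ρ t p q := by
      funext t
      exact (hherm t).apply p q
    rw [he] at h2
    rw [Matrix.conjTranspose_apply]
    exact h2.unique h1
  set B' : Matrix (ιA × ιB) (ιA × ιB) ℂ := ptransB ρ' with hB'
  have hB'herm : B'.IsHermitian := ptransB_isHermitian hρ'herm
  have hBd : ∀ p q, HasDerivAt (fun t => ptransB (ρ t) p q) (B' p q) t₀ := fun p q =>
    hderiv (p.1, q.2) (q.1, p.2)
  have hMherm : M.IsHermitian := hM ▸ hBherm t₀
  set P : Matrix (ιA × ιB) (ιA × ιB) ℂ := matAbs M with hP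
  have hPpsd : P.PosSemidef := matAbs_posSemidef M
  have hPP : P * P = M * M := by
    rw [hP, matAbs_mul_self, hMherm.eq]
  have hMdet : IsUnit M.det := (Matrix.isUnit_iff_isUnit_det M).mp hMinv
  have hPdet : IsUnit P.det := by
    have : IsUnit (P.det * P.det) := by
      rw [← Matrix.det_mul, hPP, Matrix.det_mul]
      exact hMdet.mul hMdet
    exact isUnit_of_mul_isUnit_left this
  have hPherm : P.IsHermitian := hPpsd.1
  have hPinvherm : (P⁻¹)ᴴ = P⁻¹ := by rw [Matrix.conjTranspose_nonsing_inv, hPherm.eq]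
  set S : Matrix (ιA × ιB) (ιA × ιB) ℂ := M * P⁻¹ with hS
  have hSunit : Sᴴ * S = 1 := by
    rw [hS, conjTranspose_mul, hPinvherm, hMherm.eq]
    calc P⁻¹ * M * (M * P⁻¹) = P⁻¹ * (M * M) * P⁻¹ := by simp only [Matrix.mul_assoc]
      _ = P⁻¹ * ((P * P) * P⁻¹) := by rw [hPP]; simp only [Matrix.mul_assoc]
      _ = P⁻¹ * (P * (P * P⁻¹)) := by simp only [Matrix.mul_assoc]
      _ = 1 := by
          rw [Matrix.mul_nonsing_inv _ hPdet, Matrix.mul_one, Matrix.nonsing_inv_mul _ hPdet]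
  set Dval : ℝ := ((M * P⁻¹ * B').trace).re with hDval
  -- derivative of g
  have hg : HasDerivAt (fun t => ((S * ptransB (ρ t)).trace).re) Dval t₀ := by
    have := neg_hasDerivAt_re (neg_hasDerivAt_trace_mul S hBd)
    rw [hDval, hS]
    exact this
  -- derivative of u
  have hquad := neg_hasDerivAt_re (neg_hasDerivAt_trace_quad P⁻¹ hBd)
  rw [← hM] at hquad
  have hre_eq : ((B' * P⁻¹ * M + M * P⁻¹ * B').trace).re = 2 * Dval := by
    rw [trace_add, Complex.add_re]
    have hconj : (B' * P⁻¹ * M).trace = star ((M * P⁻¹ * B').trace) := by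
      rw [← Matrix.trace_conjTranspose]
      congr 1
      rw [conjTranspose_mul, conjTranspose_mul, hPinvherm, hMherm.eq, hB'herm.eq]
      simp only [Matrix.mul_assoc]
    rw [hconj]
    rw [show (star ((M * P⁻¹ * B').trace)).re = ((M * P⁻¹ * B').trace).re from
      Complex.conj_re _]
    rw [hDval]
    ring
  have hu : HasDerivAt
      (fun t => (((ptransB (ρ t) * P⁻¹ * ptransB (ρ t)).trace).re + (P.trace).re) / 2)
      Dval t₀ := by
    have h := (hquad.add_const (P.trace).re).div_const 2
    rw [hre_eq] at h
    simpa using h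
  -- bounds
  have hlow : ∀ t, ((S * ptransB (ρ t)).trace).re ≤ traceNorm (ptransB (ρ t)) := fun t =>
    re_trace_mul_le_traceNorm S (hBherm t) hSunit
  have hup : ∀ t, traceNorm (ptransB (ρ t))
      ≤ (((ptransB (ρ t) * P⁻¹ * ptransB (ρ t)).trace).re + (P.trace).re) / 2 := fun t =>
    traceNorm_le_quad (hBherm t) hPpsd hPdet
  -- equalities at t₀
  have htr0 : (M * P⁻¹ * M).trace = P.trace := by
    rw [Matrix.trace_mul_cycle, ← hPP, Matrix.mul_assoc, Matrix.mul_nonsing_inv _ hPdet,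
      Matrix.mul_one]
  have heg : traceNorm (ptransB (ρ t₀)) = ((S * ptransB (ρ t₀)).trace).re := by
    rw [← hM, hS, htr0]
    rfl
  have heu : traceNorm (ptransB (ρ t₀))
      = (((ptransB (ρ t₀) * P⁻¹ * ptransB (ρ t₀)).trace).re + (P.trace).re) / 2 := by
    rw [← hM, htr0]
    show (P.trace).re = _
    ring
  have hfd : HasDerivAt (fun t => traceNorm (ptransB (ρ t))) Dval t₀ :=
    neg_squeeze_hasDerivAt hg hu hlow hup heg heu
  have hfinal := (hfd.sub_const 1).const_mul (1 / 2 : ℝ)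
  exact hfinal
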